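/- Let D_{1̂}, D_{2̂}, D_{3̂}, D_{4̂} be positive real numbers such that: (i) 5·D_{t̂} ≤ 3·D_{k̂} + 3·D_{ĵ} + 2·D_{î} for all distinct i, j, k, t ∈ [4]; and (ii) D_{î} < D_{k̂} + D_{ĵ} for all distinct i, j, k ∈ [4]. Then there exists a positive-weighted graph 𝒢=(G,w) whose vertex set contains distinct vertices 1,2,3,4 (and possibly other vertices) such that D_{[4]∖{i}}(𝒢) = D_{î} for every i ∈ [4]. -/

import Mathlib

open SimpleGraph Finset

/-- The total weight of a subgraph: the sum of the weights of its edges. -/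
noncomputable def subgraphWeight {V : Type} [Fintype V] {G : SimpleGraph V}
    (w : Sym2 V → ℝ) (R : G.Subgraph) : ℝ :=
  ∑ e ∈ (Set.toFinite R.edgeSet).toFinset, w e

/-- `graphDist G w I` is the minimum of `subgraphWeight w R` over connected
subgraphs `R` of `G` whose vertex set contains `I`. -/
noncomputable def graphDist {V : Type} [Fintype V] (G : SimpleGraph V)
    (w : Sym2 V → ℝ) (I : Set V) : ℝ :=
  sInf { x : ℝ | ∃ R : G.Subgraph, R.Connected ∧ I ⊆ R.verts ∧ subgraphWeight w R = x }

/-- A weight function is positive on a graph if every edge has positive weight. -/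
def PosWeighted {V : Type} (G : SimpleGraph V) (w : Sym2 V → ℝ) : Prop :=
  ∀ e ∈ G.edgeSet, 0 < w e


section gate

noncomputable def W0 (a b1 b2 b3 : ℝ) : Fin 7 → Fin 7 → ℝ :=
  ![![0,0,0,0,a,a,a],
    ![0,0,0,0,0,b1,b1],
    ![0,0,0,0,b2,0,b2],
    ![0,0,0,0,b3,b3,0],
    ![0,0,0,0,0,0,0],
    ![0,0,0,0,0,0,0],
    ![0,0,0,0,0,0,0]]

noncomputable def wfun (a b1 b2 b3 : ℝ) : Sym2 (Fin 7) → ℝ :=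
  Sym2.lift ⟨fun u v => W0 a b1 b2 b3 u v + W0 a b1 b2 b3 v u, fun u v => add_comm _ _⟩

def A7 : Fin 7 → Fin 7 → Bool :=
  ![![false,false,false,false,true,true,true],
    ![false,false,false,false,false,true,true],
    ![false,false,false,false,true,false,true],
    ![false,false,false,false,true,true,false],
    ![true,false,true,true,false,false,false],
    ![true,true,false,true,false,false,false],
    ![true,true,true,false,false,false,false]]

def G7 : SimpleGraph (Fin 7) where
  Adj u v := A7 u v
  symm := ⟨fun u v h => (by decide : ∀ u v : Fin 7, A7 u v = true → A7 v u = true) u v h⟩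
  loopless := ⟨fun v h => (by decide : ∀ v : Fin 7, ¬(A7 v v = true)) v h⟩

instance : DecidableRel G7.Adj := fun u v => decidable_of_iff (A7 u v = true) Iff.rfl

section generic

variable {V : Type} [Fintype V] [DecidableEq V]

/-- telescoping along a walk -/
lemma walk_rho {H : SimpleGraph V} (w : Sym2 V → ℝ) (ρ : V → ℝ)
    (hρ : ∀ u v, H.Adj u v → ρ u ≤ ρ v + w s(u, v)) :
    ∀ {u z : V} (W : H.Walk u z), ρ z ≤ ρ u + (W.edges.map w).sum := by
  intro u z W
  induction W with
  | nil => simp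
  | cons h p ih =>
    rename_i a b c
    calc ρ c ≤ ρ b + (p.edges.map w).sum := ih
    _ ≤ (ρ a + w s(a,b)) + (p.edges.map w).sum := by
        have := hρ b a h.symm
        rw [Sym2.eq_swap] at this
        linarith
    _ = ρ a + ((Walk.cons h p).edges.map w).sum := by
        simp [Walk.edges_cons]; ring

set_option linter.unusedSectionVars false

/-- first-hit: from `c` walk into the support of another path `P`,
collecting edges disjoint from `P`'s edges. -/
lemma first_hit {H : SimpleGraph V} (w : Sym2 V → ℝ) (ρ : V → ℝ)
    (hρ : ∀ u v, H.Adj u v → ρ u ≤ ρ v + w s(u, v))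
    {x1 x2 : V} (P : H.Walk x1 x2) :
    ∀ {c z : V} (W : H.Walk c z), W.IsPath → z ∈ P.support →
    ∃ v ∈ P.support, ∃ F : Finset (Sym2 V), (∀ e ∈ F, e ∈ W.edges) ∧
      (∀ e ∈ F, e ∉ P.edges) ∧ ρ v ≤ ρ c + ∑ e ∈ F, w e := by
  intro c z W
  induction W with
  | nil =>
    intro _ hz
    exact ⟨_, hz, ∅, by simp, by simp, by simp⟩
  | cons h p ih =>
    rename_i a b z' -- h : H.Adj a b, p : Walk b z'
    intro hP hz
    by_cases hc : a ∈ P.support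
    · exact ⟨a, hc, ∅, by simp, by simp, by simp⟩
    · obtain ⟨v, hv, F, hF0, hF1, hF2⟩ := ih hP.of_cons hz
      have hnotmem : s(a,b) ∉ F := by
        intro hmem
        have : s(a,b) ∈ p.edges := hF0 _ hmem
        have := hP.edges_nodup
        rw [Walk.edges_cons] at this
        exact (List.nodup_cons.mp this).1 ‹_›
      refine ⟨v, hv, insert s(a,b) F, ?_, ?_, ?_⟩
      · intro e he
        rw [Walk.edges_cons]
        rcases Finset.mem_insert.mp he with rfl | he'
        · exact List.mem_cons_self
        · exact List.mem_cons_of_mem _ (hF0 e he')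
      · intro e he
        rcases Finset.mem_insert.mp he with rfl | he'
        · intro hmem
          exact hc (Walk.fst_mem_support_of_mem_edges P hmem)
        · exact hF1 e he'
      · rw [Finset.sum_insert hnotmem]
        have hab : ρ b ≤ ρ a + w s(a,b) := by
          have := hρ b a h.symm
          rw [Sym2.eq_swap] at this
          linarith
        linarith


lemma steiner_lower {G : SimpleGraph V} (w : Sym2 V → ℝ) (hw : ∀ e, 0 ≤ w e)
    (R : G.Subgraph) (hR : R.Connected)
    {x1 x2 x3 : V} (h1 : x1 ∈ R.verts) (h2 : x2 ∈ R.verts) (h3 : x3 ∈ R.verts)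
    (ρ1 ρ2 ρ3 : V → ℝ)
    (hρ1 : ∀ u v, G.Adj u v → ρ1 u ≤ ρ1 v + w s(u,v)) (hx1 : ρ1 x1 = 0)
    (hρ2 : ∀ u v, G.Adj u v → ρ2 u ≤ ρ2 v + w s(u,v)) (hx2 : ρ2 x2 = 0)
    (hρ3 : ∀ u v, G.Adj u v → ρ3 u ≤ ρ3 v + w s(u,v)) (hx3 : ρ3 x3 = 0)
    {D : ℝ} (hD : ∀ v : V, D ≤ ρ1 v + ρ2 v + ρ3 v) :
    D ≤ subgraphWeight w R := by
  classical
  set H := R.coe with hH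
  set w' : Sym2 R.verts → ℝ := fun e => w (e.map Subtype.val) with hw'
  have hwe : ∀ (u v : R.verts), w' s(u,v) = w s(u.1, v.1) := by
    intro u v; simp [hw', Sym2.map_pair_eq]
  have hadj : ∀ (u v : R.verts), H.Adj u v → G.Adj u.1 v.1 := by
    intro u v h; exact R.coe_adj_sub u v h
  have hρ' : ∀ (ρ : V → ℝ), (∀ u v, G.Adj u v → ρ u ≤ ρ v + w s(u,v)) →
      ∀ (u v : R.verts), H.Adj u v → ρ u.1 ≤ ρ v.1 + w' s(u,v) := by
    intro ρ hρ u v h; rw [hwe]; exact hρ u.1 v.1 (hadj u v h)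
  set a1 : R.verts := ⟨x1, h1⟩
  set a2 : R.verts := ⟨x2, h2⟩
  set a3 : R.verts := ⟨x3, h3⟩
  have hconn : H.Connected := hR.coe
  obtain ⟨P1, hP1⟩ : ∃ P : H.Walk a1 a2, P.IsPath :=
    ⟨(hconn.preconnected a1 a2).some.bypass, Walk.bypass_isPath _⟩
  obtain ⟨P2, hP2⟩ : ∃ P : H.Walk a3 a1, P.IsPath :=
    ⟨(hconn.preconnected a3 a1).some.bypass, Walk.bypass_isPath _⟩
  obtain ⟨v, hv, F, hF0, hF1, hF2⟩ := first_hit w' (ρ3 ∘ Subtype.val) (hρ' ρ3 hρ3) P1 P2 hP2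
    (Walk.start_mem_support P1)
  -- split P1 at v
  obtain ⟨T1, T2, hT1, hT2, hsplit⟩ :
      ∃ (T1 : H.Walk a1 v) (T2 : H.Walk v a2), T1.IsPath ∧ T2.IsPath ∧ T1.append T2 = P1 :=
    ⟨P1.takeUntil v hv, P1.dropUntil v hv, hP1.takeUntil hv, hP1.dropUntil hv, P1.take_spec hv⟩
  have hb1 : (ρ1 ∘ Subtype.val) v ≤ (ρ1 ∘ Subtype.val) a1 + (T1.edges.map w').sum :=
    walk_rho w' _ (hρ' ρ1 hρ1) T1
  have hb2 : (ρ2 ∘ Subtype.val) v ≤ (ρ2 ∘ Subtype.val) a2 + (T2.reverse.edges.map w').sum :=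
    walk_rho w' _ (hρ' ρ2 hρ2) T2.reverse
  rw [Walk.edges_reverse, List.map_reverse, List.sum_reverse] at hb2
  -- finsets
  set F1 : Finset (Sym2 R.verts) := T1.edges.toFinset with hF1def
  set F2 : Finset (Sym2 R.verts) := T2.edges.toFinset with hF2def
  have hs1 : ∑ e ∈ F1, w' e = (T1.edges.map w').sum := List.sum_toFinset _ hT1.edges_nodup
  have hs2 : ∑ e ∈ F2, w' e = (T2.edges.map w').sum := List.sum_toFinset _ hT2.edges_nodup
  have hP1edges : P1.edges = T1.edges ++ T2.edges := by
    rw [← hsplit, Walk.edges_append]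
  have hnd : P1.edges.Nodup := hP1.edges_nodup
  rw [hP1edges, List.nodup_append] at hnd
  have hd12 : Disjoint F1 F2 := by
    rw [Finset.disjoint_left]
    intro e he1 he2
    exact hnd.2.2 _ (List.mem_toFinset.mp he1) _ (List.mem_toFinset.mp he2) rfl
  have hd3 : Disjoint (F1 ∪ F2) F := by
    rw [Finset.disjoint_right]
    intro e he3 he12
    apply hF1 e he3
    rw [hP1edges, List.mem_append]
    rcases Finset.mem_union.mp he12 with h | h
    · exact Or.inl (List.mem_toFinset.mp h)
    · exact Or.inr (List.mem_toFinset.mp h)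
  have key : D ≤ ∑ e ∈ (F1 ∪ F2) ∪ F, w' e := by
    rw [Finset.sum_union hd3, Finset.sum_union hd12, hs1, hs2]
    have := hD v.1
    simp only [Function.comp_apply] at hb1 hb2 hF2
    have e1 : ρ1 a1.1 = 0 := hx1
    have e2 : ρ2 a2.1 = 0 := hx2
    have e3 : ρ3 a3.1 = 0 := hx3
    rw [e1] at hb1; rw [e2] at hb2; rw [e3] at hF2
    linarith
  -- now map to V
  set emb : Sym2 R.verts → Sym2 V := Sym2.map Subtype.val with hemb
  have hinj : Function.Injective emb := Sym2.map.injective Subtype.val_injective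
  have himg : ∑ e ∈ ((F1 ∪ F2) ∪ F).image emb, w e = ∑ e ∈ (F1 ∪ F2) ∪ F, w' e := by
    rw [Finset.sum_image (fun a _ b _ h => hinj h)]
  have hsub : ((F1 ∪ F2) ∪ F).image emb ⊆ (Set.toFinite R.edgeSet).toFinset := by
    intro e he
    obtain ⟨e', he', rfl⟩ := Finset.mem_image.mp he
    have hmem : e' ∈ H.edgeSet := by
      rcases Finset.mem_union.mp he' with h | h
      · rcases Finset.mem_union.mp h with h' | h'
        · exact T1.edges_subset_edgeSet (List.mem_toFinset.mp h')
        · exact T2.edges_subset_edgeSet (List.mem_toFinset.mp h')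
      · exact P2.edges_subset_edgeSet (hF0 _ h)
    rw [Set.Finite.mem_toFinset]
    induction e' with
    | _ u v =>
      rw [SimpleGraph.mem_edgeSet] at hmem
      have : R.Adj u.1 v.1 := hmem
      simpa [hemb, Sym2.map_pair_eq] using this
  calc D ≤ ∑ e ∈ ((F1 ∪ F2) ∪ F).image emb, w e := by rw [himg]; exact key
  _ ≤ subgraphWeight w R := Finset.sum_le_sum_of_subset_of_nonneg hsub (fun e _ _ => hw e)

end generic

noncomputable def pot0 (a b1 b2 b3 : ℝ) : Fin 7 → ℝ := ![0, a+b1, a+b2, a+b3, a, a, a]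
noncomputable def pot1 (a b1 b2 b3 : ℝ) : Fin 7 → ℝ := ![a+b1, 0, b1+b2, b1+b3, b1+b1, b1, b1]
noncomputable def pot2 (a b1 b2 b3 : ℝ) : Fin 7 → ℝ := ![a+b2, b1+b2, 0, b2+b3, b2, b2+b1, b2]
noncomputable def pot3 (a b1 b2 b3 : ℝ) : Fin 7 → ℝ := ![a+b3, b1+b3, b2+b3, 0, b3, b3, b3+b1]

section facts
variable {a b1 b2 b3 : ℝ} (ha : 0 < a) (hb1 : 0 < b1) (hb2 : 0 < b2) (hb3 : 0 < b3)
  (h12 : b1 ≤ b2) (h13 : b1 ≤ b3) (h2a : b1 ≤ 2*a)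

include ha hb1 hb2 hb3 in
lemma hw_nonneg : ∀ e, 0 ≤ wfun a b1 b2 b3 e := by
  intro e
  induction e with
  | _ u v =>
    fin_cases u <;> fin_cases v <;> (show (0:ℝ) ≤ _ + _) <;> norm_num [W0] <;> linarith

include ha hb1 hb2 hb3 in
lemma posw : PosWeighted G7 (wfun a b1 b2 b3) := by
  intro e he
  induction e with
  | _ u v =>
    rw [SimpleGraph.mem_edgeSet] at he
    have h' : A7 u v = true := he
    fin_cases u <;> fin_cases v <;>
      first
        | exact absurd h' (by decide)
        | ((show (0:ℝ) < _ + _) <;> norm_num [W0] <;> linarith)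

include ha hb1 hb2 hb3 h12 h13 h2a in
lemma lip0 : ∀ u v, G7.Adj u v →
    pot0 a b1 b2 b3 u ≤ pot0 a b1 b2 b3 v + wfun a b1 b2 b3 s(u,v) := by
  intro u v h
  have h' : A7 u v = true := h
  fin_cases u <;> fin_cases v <;>
    first
      | exact absurd h' (by decide)
      | (simp only [pot0, wfun, W0, Sym2.lift_mk] <;> norm_num <;> linarith)

include ha hb1 hb2 hb3 h12 h13 h2a in
lemma lip1 : ∀ u v, G7.Adj u v →
    pot1 a b1 b2 b3 u ≤ pot1 a b1 b2 b3 v + wfun a b1 b2 b3 s(u,v) := by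
  intro u v h
  have h' : A7 u v = true := h
  fin_cases u <;> fin_cases v <;>
    first
      | exact absurd h' (by decide)
      | (simp only [pot1, wfun, W0, Sym2.lift_mk] <;> norm_num <;> linarith)

include ha hb1 hb2 hb3 h12 h13 h2a in
lemma lip2 : ∀ u v, G7.Adj u v →
    pot2 a b1 b2 b3 u ≤ pot2 a b1 b2 b3 v + wfun a b1 b2 b3 s(u,v) := by
  intro u v h
  have h' : A7 u v = true := h
  fin_cases u <;> fin_cases v <;>
    first
      | exact absurd h' (by decide)
      | (simp only [pot2, wfun, W0, Sym2.lift_mk] <;> norm_num <;> linarith)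

include ha hb1 hb2 hb3 h12 h13 h2a in
lemma lip3 : ∀ u v, G7.Adj u v →
    pot3 a b1 b2 b3 u ≤ pot3 a b1 b2 b3 v + wfun a b1 b2 b3 s(u,v) := by
  intro u v h
  have h' : A7 u v = true := h
  fin_cases u <;> fin_cases v <;>
    first
      | exact absurd h' (by decide)
      | (simp only [pot3, wfun, W0, Sym2.lift_mk] <;> norm_num <;> linarith)

include ha hb1 hb2 hb3 h12 h13 h2a in
lemma sum0 : ∀ v, 2*b1+b2+b3 ≤ pot1 a b1 b2 b3 v + pot2 a b1 b2 b3 v + pot3 a b1 b2 b3 v := by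
  intro v
  fin_cases v <;> simp only [pot1, pot2, pot3] <;> norm_num <;> linarith

include ha hb1 hb2 hb3 h12 h13 h2a in
lemma sum1 : ∀ v, a+b2+b3 ≤ pot0 a b1 b2 b3 v + pot2 a b1 b2 b3 v + pot3 a b1 b2 b3 v := by
  intro v
  fin_cases v <;> simp only [pot0, pot2, pot3] <;> norm_num <;> linarith

include ha hb1 hb2 hb3 h12 h13 h2a in
lemma sum2 : ∀ v, a+b1+b3 ≤ pot0 a b1 b2 b3 v + pot1 a b1 b2 b3 v + pot3 a b1 b2 b3 v := by
  intro v
  fin_cases v <;> simp only [pot0, pot1, pot3] <;> norm_num <;> linarith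

include ha hb1 hb2 hb3 h12 h13 h2a in
lemma sum3 : ∀ v, a+b1+b2 ≤ pot0 a b1 b2 b3 v + pot1 a b1 b2 b3 v + pot2 a b1 b2 b3 v := by
  intro v
  fin_cases v <;> simp only [pot0, pot1, pot2] <;> norm_num <;> linarith

end facts
-- R0 : path 3-5-1-6-2 ; R1 : star at 4 to 0,2,3 ; R2 : star at 5 to 0,1,3 ; R3 : star at 6 to 0,1,2
def R0 : G7.Subgraph :=
  (G7.subgraphOfAdj (show G7.Adj 1 5 by decide) ⊔ G7.subgraphOfAdj (show G7.Adj 3 5 by decide)) ⊔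
  (G7.subgraphOfAdj (show G7.Adj 1 6 by decide) ⊔ G7.subgraphOfAdj (show G7.Adj 2 6 by decide))

def R1 : G7.Subgraph :=
  (G7.subgraphOfAdj (show G7.Adj 0 4 by decide) ⊔ G7.subgraphOfAdj (show G7.Adj 2 4 by decide)) ⊔
  G7.subgraphOfAdj (show G7.Adj 3 4 by decide)

def R2 : G7.Subgraph :=
  (G7.subgraphOfAdj (show G7.Adj 0 5 by decide) ⊔ G7.subgraphOfAdj (show G7.Adj 1 5 by decide)) ⊔
  G7.subgraphOfAdj (show G7.Adj 3 5 by decide)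

def R3 : G7.Subgraph :=
  (G7.subgraphOfAdj (show G7.Adj 0 6 by decide) ⊔ G7.subgraphOfAdj (show G7.Adj 1 6 by decide)) ⊔
  G7.subgraphOfAdj (show G7.Adj 2 6 by decide)

lemma SimpleGraph.Subgraph.Connected.sup {V : Type*} {G : SimpleGraph V} {H K : G.Subgraph}
    (hH : H.Connected) (hK : K.Connected) (hn : (H ⊓ K).verts.Nonempty) : (H ⊔ K).Connected :=
  Subgraph.connected_sup hH.preconnected hK.preconnected hn

lemma conn0 : R0.Connected := by
  apply Subgraph.Connected.sup
  · exact Subgraph.Connected.sup (SimpleGraph.Subgraph.subgraphOfAdj_connected _) (SimpleGraph.Subgraph.subgraphOfAdj_connected _)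
      ⟨5, by simp⟩
  · exact Subgraph.Connected.sup (SimpleGraph.Subgraph.subgraphOfAdj_connected _) (SimpleGraph.Subgraph.subgraphOfAdj_connected _)
      ⟨6, by simp⟩
  · exact ⟨1, by simp⟩

lemma conn1 : R1.Connected := by
  apply Subgraph.Connected.sup
  · exact Subgraph.Connected.sup (SimpleGraph.Subgraph.subgraphOfAdj_connected _) (SimpleGraph.Subgraph.subgraphOfAdj_connected _)
      ⟨4, by simp⟩
  · exact SimpleGraph.Subgraph.subgraphOfAdj_connected _
  · exact ⟨4, by simp⟩

lemma conn2 : R2.Connected := by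
  apply Subgraph.Connected.sup
  · exact Subgraph.Connected.sup (SimpleGraph.Subgraph.subgraphOfAdj_connected _) (SimpleGraph.Subgraph.subgraphOfAdj_connected _)
      ⟨5, by simp⟩
  · exact SimpleGraph.Subgraph.subgraphOfAdj_connected _
  · exact ⟨5, by simp⟩

lemma conn3 : R3.Connected := by
  apply Subgraph.Connected.sup
  · exact Subgraph.Connected.sup (SimpleGraph.Subgraph.subgraphOfAdj_connected _) (SimpleGraph.Subgraph.subgraphOfAdj_connected _)
      ⟨6, by simp⟩
  · exact SimpleGraph.Subgraph.subgraphOfAdj_connected _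
  · exact ⟨6, by simp⟩

lemma edge0 : (Set.toFinite R0.edgeSet).toFinset =
    ({s(1,5), s(3,5), s(1,6), s(2,6)} : Finset (Sym2 (Fin 7))) := by
  ext e
  simp [R0, Subgraph.edgeSet_sup, or_assoc]; tauto

lemma edge1 : (Set.toFinite R1.edgeSet).toFinset =
    ({s(0,4), s(2,4), s(3,4)} : Finset (Sym2 (Fin 7))) := by
  ext e
  simp [R1, Subgraph.edgeSet_sup, or_assoc]; tauto

lemma edge2 : (Set.toFinite R2.edgeSet).toFinset =
    ({s(0,5), s(1,5), s(3,5)} : Finset (Sym2 (Fin 7))) := by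
  ext e
  simp [R2, Subgraph.edgeSet_sup, or_assoc]; tauto

lemma edge3 : (Set.toFinite R3.edgeSet).toFinset =
    ({s(0,6), s(1,6), s(2,6)} : Finset (Sym2 (Fin 7))) := by
  ext e
  simp [R3, Subgraph.edgeSet_sup, or_assoc]; tauto

end gate

theorem aux_sorted (D : Fin 4 → ℝ) (hD : ∀ i, 0 < D i)
    (h1 : ∀ i j k t : Fin 4, i ≠ j → i ≠ k → i ≠ t → j ≠ k → j ≠ t → k ≠ t →
      5 * D t ≤ 3 * D k + 3 * D j + 2 * D i)
    (h2 : ∀ i j k : Fin 4, i ≠ j → i ≠ k → j ≠ k → D i < D k + D j)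
    (s1 : D 1 ≤ D 0) (s2 : D 2 ≤ D 1) (s3 : D 3 ≤ D 1) :
    ∃ (V : Type) (inst : Fintype V) (G : SimpleGraph V) (w : Sym2 V → ℝ)
      (ι : Fin 4 → V), PosWeighted G w ∧ Function.Injective ι ∧
      ∀ i : Fin 4, @graphDist V inst G w (ι '' {m | m ≠ i}) = D i := by
  classical
  set a : ℝ := (D 2 + D 3 - D 0)/2 with hadef
  set b1 : ℝ := (D 0 + 2*D 1 + D 2 + D 3)/4 - D 1 with hb1def
  set b2 : ℝ := (D 0 + 2*D 1 + D 2 + D 3)/4 - D 2 with hb2def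
  set b3 : ℝ := (D 0 + 2*D 1 + D 2 + D 3)/4 - D 3 with hb3def
  have k023 : D 0 < D 3 + D 2 := h2 0 2 3 (by decide) (by decide) (by decide)
  have k123 : D 1 < D 3 + D 2 := h2 1 2 3 (by decide) (by decide) (by decide)
  have k203 : D 2 < D 3 + D 0 := h2 2 0 3 (by decide) (by decide) (by decide)
  have k302 : D 3 < D 2 + D 0 := h2 3 0 2 (by decide) (by decide) (by decide)
  have key : 5 * D 0 ≤ 3 * D 3 + 3 * D 2 + 2 * D 1 :=
    h1 1 2 3 0 (by decide) (by decide) (by decide) (by decide) (by decide) (by decide)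
  have ha : 0 < a := by rw [hadef]; linarith
  have hb1 : 0 < b1 := by rw [hb1def]; linarith
  have hb2 : 0 < b2 := by rw [hb2def]; linarith
  have hb3 : 0 < b3 := by rw [hb3def]; linarith
  have h12 : b1 ≤ b2 := by rw [hb1def, hb2def]; linarith
  have h13 : b1 ≤ b3 := by rw [hb1def, hb3def]; linarith
  have h2a : b1 ≤ 2*a := by rw [hb1def, hadef]; linarith
  have hD0 : D 0 = 2*b1+b2+b3 := by rw [hb1def, hb2def, hb3def]; ring
  have hD1 : D 1 = a+b2+b3 := by rw [hadef, hb2def, hb3def]; ring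
  have hD2 : D 2 = a+b1+b3 := by rw [hadef, hb1def, hb3def]; ring
  have hD3 : D 3 = a+b1+b2 := by rw [hadef, hb1def, hb2def]; ring
  set w : Sym2 (Fin 7) → ℝ := wfun a b1 b2 b3 with hwdef
  have hw : ∀ e, 0 ≤ w e := hw_nonneg ha hb1 hb2 hb3
  set ι : Fin 4 → Fin 7 := ![0,1,2,3] with hiota
  refine ⟨Fin 7, inferInstance, G7, w, ι, posw ha hb1 hb2 hb3, by decide, ?_⟩
  have l0 := lip0 ha hb1 hb2 hb3 h12 h13 h2a
  have l1 := lip1 ha hb1 hb2 hb3 h12 h13 h2a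
  have l2 := lip2 ha hb1 hb2 hb3 h12 h13 h2a
  have l3 := lip3 ha hb1 hb2 hb3 h12 h13 h2a
  have z0 : pot0 a b1 b2 b3 0 = 0 := rfl
  have z1 : pot1 a b1 b2 b3 1 = 0 := rfl
  have z2 : pot2 a b1 b2 b3 2 = 0 := rfl
  have z3 : pot3 a b1 b2 b3 3 = 0 := rfl
  intro i
  -- memberships of terminals in images
  have mem_img : ∀ (i m : Fin 4), m ≠ i → ι m ∈ ι '' {m | m ≠ i} := by
    intro i m hm
    exact Set.mem_image_of_mem ι hm
  fin_cases i
  · -- i = 0, terminals 1 2 3, value D 0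
    have lower : ∀ R : G7.Subgraph, R.Connected → (ι '' {m | m ≠ 0}) ⊆ R.verts →
        D 0 ≤ subgraphWeight w R := by
      intro R hc hsub
      have m1 : (1 : Fin 7) ∈ R.verts := hsub (mem_img 0 1 (by decide))
      have m2 : (2 : Fin 7) ∈ R.verts := hsub (mem_img 0 2 (by decide))
      have m3 : (3 : Fin 7) ∈ R.verts := hsub (mem_img 0 3 (by decide))
      rw [hD0]
      exact steiner_lower w hw R hc m1 m2 m3 _ _ _ l1 z1 l2 z2 l3 z3
        (sum0 ha hb1 hb2 hb3 h12 h13 h2a)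
    have hsub0 : (ι '' {m | m ≠ 0}) ⊆ R0.verts := by
      rintro x ⟨m, hm, rfl⟩
      fin_cases m
      · exact absurd rfl hm
      · simp [R0, ι]
      · simp [R0, ι]
      · simp [R0, ι]
    have hw0 : subgraphWeight w R0 = D 0 := by
      rw [subgraphWeight, edge0, hD0]
      rw [Finset.sum_insert (by decide), Finset.sum_insert (by decide),
        Finset.sum_insert (by decide), Finset.sum_singleton]
      show b1 + 0 + (b3 + 0 + (b1 + 0 + (b2 + 0))) = 2*b1+b2+b3
      ring
    have hmem : D 0 ∈ {x : ℝ | ∃ R : G7.Subgraph, R.Connected ∧ (ι '' {m | m ≠ 0}) ⊆ R.verts ∧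
        subgraphWeight w R = x} := ⟨R0, conn0, hsub0, hw0⟩
    refine le_antisymm (csInf_le ⟨D 0, ?_⟩ hmem) (le_csInf ⟨_, hmem⟩ ?_) <;>
      · rintro x ⟨R, hc, hs, rfl⟩
        exact lower R hc hs
  · -- i = 1, three terminals
    have lower : ∀ R : G7.Subgraph, R.Connected → (ι '' {m | m ≠ 1}) ⊆ R.verts →
        D 1 ≤ subgraphWeight w R := by
      intro R hc hsub
      have m1 : (0 : Fin 7) ∈ R.verts := hsub (mem_img 1 0 (by decide))
      have m2 : (2 : Fin 7) ∈ R.verts := hsub (mem_img 1 2 (by decide))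
      have m3 : (3 : Fin 7) ∈ R.verts := hsub (mem_img 1 3 (by decide))
      rw [hD1]
      exact steiner_lower w hw R hc m1 m2 m3 _ _ _ l0 z0 l2 z2 l3 z3
        (sum1 ha hb1 hb2 hb3 h12 h13 h2a)
    have hsubR : (ι '' {m | m ≠ 1}) ⊆ R1.verts := by
      rintro x ⟨m, hm, rfl⟩
      fin_cases m
      · simp [R1, ι]
      · exact absurd rfl hm
      · simp [R1, ι]
      · simp [R1, ι]
    have hwR : subgraphWeight w R1 = D 1 := by
      rw [subgraphWeight, edge1, hD1]
      rw [Finset.sum_insert (by decide), Finset.sum_insert (by decide), Finset.sum_singleton]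
      show a + 0 + (b2 + 0 + (b3 + 0)) = a+b2+b3
      ring
    have hmem : D 1 ∈ {x : ℝ | ∃ R : G7.Subgraph, R.Connected ∧ (ι '' {m | m ≠ 1}) ⊆ R.verts ∧
        subgraphWeight w R = x} := ⟨R1, conn1, hsubR, hwR⟩
    refine le_antisymm (csInf_le ⟨D 1, ?_⟩ hmem) (le_csInf ⟨_, hmem⟩ ?_) <;>
      · rintro x ⟨R, hc, hs, rfl⟩
        exact lower R hc hs
  · -- i = 2, three terminals
    have lower : ∀ R : G7.Subgraph, R.Connected → (ι '' {m | m ≠ 2}) ⊆ R.verts →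
        D 2 ≤ subgraphWeight w R := by
      intro R hc hsub
      have m1 : (0 : Fin 7) ∈ R.verts := hsub (mem_img 2 0 (by decide))
      have m2 : (1 : Fin 7) ∈ R.verts := hsub (mem_img 2 1 (by decide))
      have m3 : (3 : Fin 7) ∈ R.verts := hsub (mem_img 2 3 (by decide))
      rw [hD2]
      exact steiner_lower w hw R hc m1 m2 m3 _ _ _ l0 z0 l1 z1 l3 z3
        (sum2 ha hb1 hb2 hb3 h12 h13 h2a)
    have hsubR : (ι '' {m | m ≠ 2}) ⊆ R2.verts := by
      rintro x ⟨m, hm, rfl⟩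
      fin_cases m
      · simp [R2, ι]
      · simp [R2, ι]
      · exact absurd rfl hm
      · simp [R2, ι]
    have hwR : subgraphWeight w R2 = D 2 := by
      rw [subgraphWeight, edge2, hD2]
      rw [Finset.sum_insert (by decide), Finset.sum_insert (by decide), Finset.sum_singleton]
      show a + 0 + (b1 + 0 + (b3 + 0)) = a+b1+b3
      ring
    have hmem : D 2 ∈ {x : ℝ | ∃ R : G7.Subgraph, R.Connected ∧ (ι '' {m | m ≠ 2}) ⊆ R.verts ∧
        subgraphWeight w R = x} := ⟨R2, conn2, hsubR, hwR⟩
    refine le_antisymm (csInf_le ⟨D 2, ?_⟩ hmem) (le_csInf ⟨_, hmem⟩ ?_) <;>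
      · rintro x ⟨R, hc, hs, rfl⟩
        exact lower R hc hs
  · -- i = 3, three terminals
    have lower : ∀ R : G7.Subgraph, R.Connected → (ι '' {m | m ≠ 3}) ⊆ R.verts →
        D 3 ≤ subgraphWeight w R := by
      intro R hc hsub
      have m1 : (0 : Fin 7) ∈ R.verts := hsub (mem_img 3 0 (by decide))
      have m2 : (1 : Fin 7) ∈ R.verts := hsub (mem_img 3 1 (by decide))
      have m3 : (2 : Fin 7) ∈ R.verts := hsub (mem_img 3 2 (by decide))
      rw [hD3]
      exact steiner_lower w hw R hc m1 m2 m3 _ _ _ l0 z0 l1 z1 l2 z2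
        (sum3 ha hb1 hb2 hb3 h12 h13 h2a)
    have hsubR : (ι '' {m | m ≠ 3}) ⊆ R3.verts := by
      rintro x ⟨m, hm, rfl⟩
      fin_cases m
      · simp [R3, ι]
      · simp [R3, ι]
      · simp [R3, ι]
      · exact absurd rfl hm
    have hwR : subgraphWeight w R3 = D 3 := by
      rw [subgraphWeight, edge3, hD3]
      rw [Finset.sum_insert (by decide), Finset.sum_insert (by decide), Finset.sum_singleton]
      show a + 0 + (b1 + 0 + (b2 + 0)) = a+b1+b2
      ring
    have hmem : D 3 ∈ {x : ℝ | ∃ R : G7.Subgraph, R.Connected ∧ (ι '' {m | m ≠ 3}) ⊆ R.verts ∧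
        subgraphWeight w R = x} := ⟨R3, conn3, hsubR, hwR⟩
    refine le_antisymm (csInf_le ⟨D 3, ?_⟩ hmem) (le_csInf ⟨_, hmem⟩ ?_) <;>
      · rintro x ⟨R, hc, hs, rfl⟩
        exact lower R hc hs

/-- Theorem 4.4, sufficiency: four positive reals satisfying (i) and (ii) are
the `3`-weights of a positive-weighted graph whose vertex set contains four
distinct vertices `1,2,3,4` (and possibly other vertices). -/
theorem four_weights_exists (D : Fin 4 → ℝ) (hD : ∀ i, 0 < D i)
    (h1 : ∀ i j k t : Fin 4, i ≠ j → i ≠ k → i ≠ t → j ≠ k → j ≠ t → k ≠ t →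
      5 * D t ≤ 3 * D k + 3 * D j + 2 * D i)
    (h2 : ∀ i j k : Fin 4, i ≠ j → i ≠ k → j ≠ k → D i < D k + D j) :
    ∃ (V : Type) (inst : Fintype V) (G : SimpleGraph V) (w : Sym2 V → ℝ)
      (ι : Fin 4 → V), PosWeighted G w ∧ Function.Injective ι ∧
      ∀ i : Fin 4, @graphDist V inst G w (ι '' {m | m ≠ i}) = D i := by
  classical
  set σ : Equiv.Perm (Fin 4) := Tuple.sort D with hσ
  have mono : Monotone (D ∘ σ) := Tuple.monotone_sort D
  set ψ : Equiv.Perm (Fin 4) := Fin.revPerm.trans σ with hψ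
  set D' : Fin 4 → ℝ := D ∘ ψ with hD'
  have hψv : ∀ i : Fin 4, ψ i = σ i.rev := fun i => rfl
  have s1 : D' 1 ≤ D' 0 := by
    show D (σ (1:Fin 4).rev) ≤ D (σ (0:Fin 4).rev)
    have : ((1:Fin 4).rev : Fin 4) ≤ (0:Fin 4).rev := by decide
    exact mono this
  have s2 : D' 2 ≤ D' 1 := by
    show D (σ (2:Fin 4).rev) ≤ D (σ (1:Fin 4).rev)
    exact mono (by decide : ((2:Fin 4).rev : Fin 4) ≤ (1:Fin 4).rev)
  have s3 : D' 3 ≤ D' 1 := by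
    show D (σ (3:Fin 4).rev) ≤ D (σ (1:Fin 4).rev)
    exact mono (by decide : ((3:Fin 4).rev : Fin 4) ≤ (1:Fin 4).rev)
  obtain ⟨V, inst, G, w, ι, hpos, hinj, hdist⟩ :=
    aux_sorted D' (fun i => hD _)
      (fun i j k t hij hik hit hjk hjt hkt =>
        h1 (ψ i) (ψ j) (ψ k) (ψ t) (fun h => hij (ψ.injective h))
          (fun h => hik (ψ.injective h)) (fun h => hit (ψ.injective h))
          (fun h => hjk (ψ.injective h)) (fun h => hjt (ψ.injective h))
          (fun h => hkt (ψ.injective h)))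
      (fun i j k hij hik hjk =>
        h2 (ψ i) (ψ j) (ψ k) (fun h => hij (ψ.injective h))
          (fun h => hik (ψ.injective h)) (fun h => hjk (ψ.injective h)))
      s1 s2 s3
  refine ⟨V, inst, G, w, ι ∘ ψ.symm, hpos, hinj.comp ψ.symm.injective, ?_⟩
  intro i
  have hsets : ψ.symm '' {m | m ≠ i} = {m | m ≠ ψ.symm i} := by
    ext x
    simp only [Set.mem_image, Set.mem_setOf_eq]
    constructor
    · rintro ⟨y, hy, rfl⟩
      exact fun h => hy (ψ.symm.injective h)
    · intro hx
      exact ⟨ψ x, fun h => hx (by rw [← h, Equiv.symm_apply_apply]),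
        Equiv.symm_apply_apply ψ x⟩
  have himg : (ι ∘ ψ.symm) '' {m | m ≠ i} = ι '' {m | m ≠ ψ.symm i} := by
    rw [Set.image_comp, hsets]
  rw [himg, hdist (ψ.symm i)]
  show D (ψ (ψ.symm i)) = D i
  rw [Equiv.apply_symm_apply]
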